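/- arXiv:2107.07469 — 2 statements merged into one kernel-verified Lean document; each statement's English description precedes it below -/
import Mathlib

section
/- The matrix A is Hermitian positive definite (A.PosDef); in particular Aᴴ = A. -/
open Matrix Kronecker
open scoped ComplexOrder

noncomputable section

/-- The Pauli z-matrix. -/
def σz : Matrix (Fin 2) (Fin 2) ℂ := !![1, 0; 0, -1]

/-- The threefold tensor product `M₂ ⊗ M₂ ⊗ M₂`, realized via Kronecker products. -/
abbrev M3 : Type := Matrix (Fin 2 × Fin 2 × Fin 2) (Fin 2 × Fin 2 × Fin 2) ℂ

/-- `tp a b c` is the elementary tensor `a ⊗ b ⊗ c` in `M₂ ⊗ M₂ ⊗ M₂`. -/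
def tp (a b c : Matrix (Fin 2) (Fin 2) ℂ) : M3 := a ⊗ₖ (b ⊗ₖ c)

def K₀ (β : ℝ) : ℝ := (Real.exp β + 1) / 2
def K₃ (β : ℝ) : ℝ := (Real.exp β - 1) / 2
def R₀ (β J : ℝ) : ℝ := (Real.exp (J * β) + 1) / 2
def R₃ (β J : ℝ) : ℝ := (Real.exp (J * β) - 1) / 2

/-- `K¹² = K₀•(1⊗1⊗1) + K₃•(σ⊗σ⊗1)`. -/
def K12 (β : ℝ) : M3 := ((K₀ β : ℝ) : ℂ) • tp 1 1 1 + ((K₃ β : ℝ) : ℂ) • tp σz σz 1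

/-- `K¹³ = K₀•(1⊗1⊗1) + K₃•(σ⊗1⊗σ)`. -/
def K13 (β : ℝ) : M3 := ((K₀ β : ℝ) : ℂ) • tp 1 1 1 + ((K₃ β : ℝ) : ℂ) • tp σz 1 σz

/-- `L²³ = R₀•(1⊗1⊗1) + R₃•(1⊗σ⊗σ)`. -/
def L23 (β J : ℝ) : M3 := ((R₀ β J : ℝ) : ℂ) • tp 1 1 1 + ((R₃ β J : ℝ) : ℂ) • tp 1 σz σz

/-- The transfer operator `A = K¹² K¹³ L²³` of the Ising model with competing interactions. -/
def A (β J : ℝ) : M3 := K12 β * K13 β * L23 β J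

def sgn : Fin 2 → ℂ := ![1, -1]

lemma σz_diag : σz = diagonal sgn := by
  ext i j; fin_cases i <;> fin_cases j <;> simp [σz, sgn, diagonal]

lemma tp_diag (a b c : Fin 2 → ℂ) :
    tp (diagonal a) (diagonal b) (diagonal c)
      = diagonal (fun p => a p.1 * (b p.2.1 * c p.2.2)) := by
  rw [tp, diagonal_kronecker_diagonal, diagonal_kronecker_diagonal]

lemma A_diag (β J : ℝ) : A β J = diagonal (fun p =>
    ((K₀ β : ℂ) + (K₃ β : ℂ) * (sgn p.1 * sgn p.2.1)) *
    (((K₀ β : ℂ) + (K₃ β : ℂ) * (sgn p.1 * sgn p.2.2)) *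
    ((R₀ β J : ℂ) + (R₃ β J : ℂ) * (sgn p.2.1 * sgn p.2.2)))) := by
  have h1 : (1 : Matrix (Fin 2) (Fin 2) ℂ) = diagonal (fun _ => 1) := by
    simp [diagonal_one]
  rw [A, K12, K13, L23, σz_diag, h1, tp_diag, tp_diag, tp_diag, tp_diag]
  simp only [← diagonal_smul, diagonal_add, diagonal_mul_diagonal]
  refine congrArg diagonal (funext fun p => ?_)
  simp only [Pi.add_apply, Pi.smul_apply, smul_eq_mul, mul_one]
  ring

lemma sgn_cases (i : Fin 2) : sgn i = 1 ∨ sgn i = -1 := by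
  fin_cases i <;> simp [sgn]

lemma factor_pos {a b : ℝ} (h : a + b > 0) (h' : a - b > 0) {s : ℂ}
    (hs : s = 1 ∨ s = -1) : 0 < (a : ℂ) + (b : ℂ) * s := by
  rcases hs with h1 | h1 <;> subst h1
  · rw [mul_one, ← Complex.ofReal_add]; exact_mod_cast h
  · rw [mul_neg_one, ← sub_eq_add_neg, ← Complex.ofReal_sub]; exact_mod_cast h'

/-- The transfer operator `A` is Hermitian positive definite; in particular `Aᴴ = A`. -/
theorem transfer_operator_posDef (β J : ℝ) (hβ : 0 < β) (hJ : 0 < J) :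
    (A β J).PosDef ∧ (A β J)ᴴ = A β J := by
  have hK : 0 < Real.exp β := Real.exp_pos β
  have hR : 0 < Real.exp (J * β) := Real.exp_pos _
  have hpd : (A β J).PosDef := by
    rw [A_diag]
    refine Matrix.posDef_diagonal_iff.mpr fun p => ?_
    have hs : ∀ (i j : Fin 2), sgn i * sgn j = 1 ∨ sgn i * sgn j = -1 := by
      intro i j
      rcases sgn_cases i with h | h <;> rcases sgn_cases j with h' | h' <;>
        rw [h, h'] <;> norm_num
    have f1 : 0 < (K₀ β : ℂ) + (K₃ β : ℂ) * (sgn p.1 * sgn p.2.1) :=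
      factor_pos (by rw [K₀, K₃]; linarith) (by rw [K₀, K₃]; linarith) (hs _ _)
    have f2 : 0 < (K₀ β : ℂ) + (K₃ β : ℂ) * (sgn p.1 * sgn p.2.2) :=
      factor_pos (by rw [K₀, K₃]; linarith) (by rw [K₀, K₃]; linarith) (hs _ _)
    have f3 : 0 < (R₀ β J : ℂ) + (R₃ β J : ℂ) * (sgn p.2.1 * sgn p.2.2) :=
      factor_pos (by rw [R₀, R₃]; linarith) (by rw [R₀, R₃]; linarith) (hs _ _)
    exact mul_pos f1 (mul_pos f2 f3)
  exact ⟨hpd, hpd.1⟩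
end
end

section
/- Let h = α•1₂ : Matrix (Fin 2) (Fin 2) ℂ. Then PT (Aᴴ * (1₂⊗h⊗h) * A) = h; equivalently, PT (Aᴴ * A) = α⁻¹•1₂. -/
open Matrix Kronecker

noncomputable section

/-- The normalizing constant `α`. -/
def αc (β J : ℝ) : ℝ :=
  4 / (Real.exp (2 * J * β) * (Real.exp (4 * β) + 1) + 2 * Real.exp (2 * β))

/-- The normalized partial trace over the second and third tensor factors. -/
def PT (m : M3) : Matrix (Fin 2) (Fin 2) ℂ :=
  Matrix.of fun s t => (1 / 4 : ℂ) * ∑ u : Fin 2, ∑ v : Fin 2, m (s, u, v) (t, u, v)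

lemma tp_mul (a b c a' b' c' : Matrix (Fin 2) (Fin 2) ℂ) :
    tp a b c * tp a' b' c' = tp (a * a') (b * b') (c * c') := by
  simp [tp, ← Matrix.mul_kronecker_mul]

lemma σz_mul_σz : σz * σz = 1 := by
  ext i j
  fin_cases i <;> fin_cases j <;>
    simp [σz, Matrix.mul_apply, Fin.sum_univ_two, Matrix.one_apply]

lemma σz_conjT : σzᴴ = σz := by
  ext i j
  fin_cases i <;> fin_cases j <;> simp [σz]

lemma tp_conjT (a b c : Matrix (Fin 2) (Fin 2) ℂ) : (tp a b c)ᴴ = tp aᴴ bᴴ cᴴ := by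
  ext i j
  simp [tp, Matrix.conjTranspose_apply, Matrix.kroneckerMap_apply, star_mul']

lemma tp_one : tp 1 1 1 = (1 : M3) := by
  simp [tp, Matrix.one_kronecker_one]

lemma PT_smul (c : ℂ) (m : M3) : PT (c • m) = c • PT m := by
  ext s t
  simp [PT, Fin.sum_univ_two]
  ring

lemma PT_add (m n : M3) : PT (m + n) = PT m + PT n := by
  ext s t
  simp [PT, Fin.sum_univ_two]
  ring

lemma PT_one : PT (tp 1 1 1) = 1 := by
  rw [tp_one]
  ext s t
  fin_cases s <;> fin_cases t <;>
    simp [PT, Fin.sum_univ_two, Matrix.one_apply] <;> norm_num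

lemma PT_t2 : PT (tp 1 σz σz) = 0 := by
  ext s t
  fin_cases s <;> fin_cases t <;>
    simp [PT, tp, σz, Fin.sum_univ_two, Matrix.one_apply]

lemma PT_t3 : PT (tp σz 1 σz) = 0 := by
  ext s t
  fin_cases s <;> fin_cases t <;>
    simp [PT, tp, σz, Fin.sum_univ_two, Matrix.one_apply]

lemma PT_t4 : PT (tp σz σz 1) = 0 := by
  ext s t
  fin_cases s <;> fin_cases t <;>
    simp [PT, tp, σz, Fin.sum_univ_two, Matrix.one_apply]

lemma A_eq (β J : ℝ) : A β J =
    (((K₀ β : ℝ) : ℂ)^2 * ((R₀ β J : ℝ) : ℂ) + ((K₃ β : ℝ) : ℂ)^2 * ((R₃ β J : ℝ) : ℂ)) • tp 1 1 1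
  + (((K₀ β : ℝ) : ℂ)^2 * ((R₃ β J : ℝ) : ℂ) + ((K₃ β : ℝ) : ℂ)^2 * ((R₀ β J : ℝ) : ℂ)) • tp 1 σz σz
  + (((K₀ β : ℝ) : ℂ) * ((K₃ β : ℝ) : ℂ) * (((R₀ β J : ℝ) : ℂ) + ((R₃ β J : ℝ) : ℂ))) • tp σz 1 σz
  + (((K₀ β : ℝ) : ℂ) * ((K₃ β : ℝ) : ℂ) * (((R₀ β J : ℝ) : ℂ) + ((R₃ β J : ℝ) : ℂ))) • tp σz σz 1 := by
  simp only [A, K12, K13, L23, add_mul, mul_add, smul_mul_assoc, mul_smul_comm,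
    tp_mul, σz_mul_σz, Matrix.one_mul, Matrix.mul_one, one_mul, mul_one, smul_smul]
  module

lemma A_conjT (β J : ℝ) : (A β J)ᴴ = A β J := by
  rw [A_eq]
  simp [Matrix.conjTranspose_add, Matrix.conjTranspose_smul, tp_conjT, σz_conjT,
    Matrix.conjTranspose_one, Complex.conj_ofReal, _root_.map_add, _root_.map_mul, map_pow]


lemma exp_sq (t : ℝ) : Real.exp (2 * t) = Real.exp t ^ 2 := by
  rw [show 2 * t = t + t by ring, Real.exp_add]; ring

lemma exp_four (t : ℝ) : Real.exp (4 * t) = Real.exp t ^ 4 := by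
  rw [show 4 * t = t + t + (t + t) by ring, Real.exp_add, Real.exp_add]; ring

lemma αc_pos (β J : ℝ) : 0 < αc β J := by
  rw [αc]
  have h1 := Real.exp_pos (2 * J * β)
  have h2 := Real.exp_pos (4 * β)
  have h3 := Real.exp_pos (2 * β)
  positivity

lemma PT_AA (β J : ℝ) :
    PT ((A β J)ᴴ * A β J) = (((αc β J : ℝ) : ℂ))⁻¹ • (1 : Matrix (Fin 2) (Fin 2) ℂ) := by
  rw [A_conjT]
  rw [A_eq]
  simp only [add_mul, mul_add, smul_mul_assoc, mul_smul_comm, tp_mul, σz_mul_σz,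
    Matrix.one_mul, Matrix.mul_one, smul_smul]
  simp only [PT_add, PT_smul, PT_one, PT_t2, PT_t3, PT_t4, smul_zero, add_zero, zero_add]
  match_scalars
  have eJ : Real.exp (2 * J * β) = Real.exp (J * β) ^ 2 := by
    rw [show 2 * J * β = 2 * (J * β) by ring, exp_sq]
  simp only [K₀, K₃, R₀, R₃, αc, eJ, exp_four, exp_sq]
  push_cast
  rw [inv_div]
  ring

/-- The constant matrix `h = α•1₂` solves the fixed-point equation
`PT(Aᴴ (1⊗h⊗h) A) = h`; equivalently `PT(Aᴴ A) = α⁻¹•1₂`. -/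
theorem fixed_point_equation (β J : ℝ) (hβ : 0 < β) (hJ : 0 < J) :
    PT ((A β J)ᴴ *
          tp 1 (((αc β J : ℝ) : ℂ) • 1) (((αc β J : ℝ) : ℂ) • 1) * A β J) =
        ((αc β J : ℝ) : ℂ) • (1 : Matrix (Fin 2) (Fin 2) ℂ) ∧
      PT ((A β J)ᴴ * A β J) = (((αc β J : ℝ) : ℂ))⁻¹ • (1 : Matrix (Fin 2) (Fin 2) ℂ) := by
  refine ⟨?_, PT_AA β J⟩
  have hc : ((αc β J : ℝ) : ℂ) ≠ 0 := by
    exact_mod_cast Complex.ofReal_ne_zero.mpr (ne_of_gt (αc_pos β J))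
  have htp : tp 1 (((αc β J : ℝ) : ℂ) • 1) (((αc β J : ℝ) : ℂ) • 1)
      = (((αc β J : ℝ) : ℂ) * ((αc β J : ℝ) : ℂ)) • (1 : M3) := by
    simp [tp, Matrix.kronecker_smul, Matrix.smul_kronecker, Matrix.one_kronecker_one, smul_smul]
    norm_cast
  rw [htp, Matrix.mul_smul, mul_one, Matrix.smul_mul, PT_smul, PT_AA, smul_smul]
  rw [mul_assoc, mul_inv_cancel₀ hc, mul_one]
end
end
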